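/- Let d ∈ ℕ with d ≥ 1 and let H be a finite simple graph on vertex set {1,…,k} that is d-regular (every vertex has degree d), with e(H) edges. Then for every graphon f, the homomorphism density satisfies t(H,f) ≤ ( ∫_{[0,1]²} f(x,y)^d dx dy )^{e(H)/d}. -/

import Mathlib

noncomputable section

open MeasureTheory Real Filter
open scoped ENNReal

section aux

variable {α : Type*} [MeasurableSpace α] (ν : Measure α) [IsProbabilityMeasure ν]

/-- Equal-exponent Hölder on a probability-type space. -/
lemma hoelder_equal {ι : Type*} (s : Finset ι) (d : ℕ) (hd : 1 ≤ d)
    (hcard : s.card = d) (c : ι → α → ℝ≥0∞) (hc : ∀ i ∈ s, AEMeasurable (c i) ν) :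
    ∫⁻ a, ∏ i ∈ s, c i a ∂ν ≤ ∏ i ∈ s, (∫⁻ a, c i a ^ d ∂ν) ^ ((d : ℝ)⁻¹) := by
  have hd0 : (d : ℝ) ≠ 0 := Nat.cast_ne_zero.2 (by omega)
  have key := ENNReal.lintegral_prod_norm_pow_le (μ := ν) s
    (f := fun i a => c i a ^ d) (fun i hi => (hc i hi).pow_const d)
    (p := fun _ => (d : ℝ)⁻¹) (by
      rw [Finset.sum_const, hcard, nsmul_eq_mul, mul_inv_cancel₀ hd0])
    (fun i _ => by positivity)
  have hpt : ∀ (i : ι) (a : α), (c i a ^ d) ^ ((d : ℝ)⁻¹) = c i a := by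
    intro i a
    rw [← ENNReal.rpow_natCast (c i a) d, ← ENNReal.rpow_mul,
      mul_inv_cancel₀ hd0, ENNReal.rpow_one]
  calc ∫⁻ a, ∏ i ∈ s, c i a ∂ν
      = ∫⁻ a, ∏ i ∈ s, (c i a ^ d) ^ ((d : ℝ)⁻¹) ∂ν := by
        simp_rw [hpt]
    _ ≤ ∏ i ∈ s, (∫⁻ a, c i a ^ d ∂ν) ^ ((d : ℝ)⁻¹) := key

/-- Edge weight used in the inductive proof of Finner's inequality.
`s` is the set of already-integrated vertices. -/
def wAux {k : ℕ} (F : α → α → ℝ≥0∞) (G : α → ℝ≥0∞) (J : ℝ≥0∞)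
    (s : Finset (Fin k)) (x : Fin k → α) (p : Fin k × Fin k) : ℝ≥0∞ :=
  if p.1 ∈ s then (if p.2 ∈ s then J else G (x p.2))
  else (if p.2 ∈ s then G (x p.1) else F (x p.1) (x p.2))

/-- The factors depending on the vertex `v` being integrated out. -/
def cAux {k : ℕ} (F : α → α → ℝ≥0∞) (G : α → ℝ≥0∞)
    (s : Finset (Fin k)) (x : Fin k → α) (v : Fin k) (p : Fin k × Fin k) (a : α) : ℝ≥0∞ :=
  if p.1 = v then (if p.2 ∈ s then G a else F a (x p.2))
  else (if p.1 ∈ s then G a else F (x p.1) a)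

/-- Finner's inequality for a `d`-regular edge set. -/
lemma finner_reg {k d : ℕ} (hd : 1 ≤ d) (E : Finset (Fin k × Fin k))
    (hne : ∀ p ∈ E, p.1 ≠ p.2)
    (hdeg : ∀ v : Fin k, (E.filter (fun p => p.1 = v ∨ p.2 = v)).card = d)
    (F : α → α → ℝ≥0∞) (hF : Measurable (Function.uncurry F))
    (hFsymm : ∀ x y, F x y = F y x) (x₀ : Fin k → α) :
    ∫⁻ x, ∏ p ∈ E, F (x p.1) (x p.2) ∂(Measure.pi fun _ : Fin k => ν)
      ≤ (∫⁻ y, ∫⁻ x, F x y ^ d ∂ν ∂ν) ^ ((E.card : ℝ) / d) := by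
  classical
  have hd0 : (d : ℝ) ≠ 0 := Nat.cast_ne_zero.2 (by omega)
  set I : ℝ≥0∞ := ∫⁻ y, ∫⁻ x, F x y ^ d ∂ν ∂ν with hI
  set G : α → ℝ≥0∞ := fun y => (∫⁻ x, F x y ^ d ∂ν) ^ ((d : ℝ)⁻¹) with hG
  have measF1 : ∀ t : α, Measurable (fun a => F a t) := fun t =>
    hF.comp (measurable_id.prodMk measurable_const)
  have measF2 : ∀ t : α, Measurable (fun a => F t a) := fun t =>
    hF.comp (measurable_const.prodMk measurable_id)
  have measG0 : Measurable (fun y => ∫⁻ x, F x y ^ d ∂ν) := by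
    apply Measurable.lintegral_prod_right
    exact ((hF.comp measurable_swap).pow_const d)
  have measG : Measurable G := measG0.pow_const ((d : ℝ)⁻¹)
  have pow_inv : ∀ z : ℝ≥0∞, (z ^ d) ^ ((d : ℝ)⁻¹) = z := by
    intro z
    rw [← ENNReal.rpow_natCast z d, ← ENNReal.rpow_mul, mul_inv_cancel₀ hd0,
      ENNReal.rpow_one]
  have G_pow : ∀ t : α, G t ^ d = ∫⁻ x, F x t ^ d ∂ν := by
    intro t
    rw [hG]
    rw [← ENNReal.rpow_natCast _ d, ← ENNReal.rpow_mul, inv_mul_cancel₀ hd0,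
      ENNReal.rpow_one]
  have G_int : ∫⁻ a, G a ^ d ∂ν = I := by
    rw [hI]; exact lintegral_congr fun a => G_pow a
  set Φ : (Fin k → α) → ℝ≥0∞ := fun y => ∏ p ∈ E, F (y p.1) (y p.2) with hΦ
  have measΦ : Measurable Φ :=
    Finset.measurable_prod _ fun p _ =>
      hF.comp (((measurable_pi_apply p.1).prodMk (measurable_pi_apply p.2) :
        Measurable fun y : Fin k → α => (y p.1, y p.2)))
  -- the key induction
  have key : ∀ s : Finset (Fin k), ∀ x : Fin k → α,
      (∫⋯∫⁻_s, Φ ∂(fun _ : Fin k => ν)) x ≤ ∏ p ∈ E, wAux F G (I ^ ((d : ℝ)⁻¹)) s x p := by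
    intro s
    induction s using Finset.induction_on with
    | empty =>
      intro x
      rw [lmarginal_empty]
      refine le_of_eq (Finset.prod_congr rfl fun p _ => ?_)
      simp [wAux]
    | @insert v s hvs ih =>
      intro x
      rw [lmarginal_insert _ measΦ hvs]
      set Ev := E.filter (fun p => p.1 = v ∨ p.2 = v) with hEv
      have hEvmem : ∀ p ∈ Ev, (p.1 = v ∧ p.2 ≠ v) ∨ (p.2 = v ∧ p.1 ≠ v) := by
        intro p hp
        rw [hEv, Finset.mem_filter] at hp
        obtain ⟨hpE, h⟩ := hp
        rcases h with h1 | h2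
        · exact Or.inl ⟨h1, fun h2 => hne p hpE (h1.trans h2.symm)⟩
        · exact Or.inr ⟨h2, fun h1 => hne p hpE (h1.trans h2.symm)⟩
      have hc_eq : ∀ a : α, ∀ p ∈ Ev,
          wAux F G (I ^ ((d : ℝ)⁻¹)) s (Function.update x v a) p = cAux F G s x v p a := by
        intro a p hp
        have e1 : Function.update x v a v = a := by simp
        rcases hEvmem p hp with ⟨h1, h2⟩ | ⟨h2, h1⟩
        · have e2 : Function.update x v a p.1 = a := by rw [h1]; exact e1
          have e3 : Function.update x v a p.2 = x p.2 := Function.update_of_ne h2 _ _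
          simp [wAux, cAux, h1, h2, hvs, e2, e3]
        · have e2 : Function.update x v a p.2 = a := by rw [h2]; exact e1
          have e3 : Function.update x v a p.1 = x p.1 := Function.update_of_ne h1 _ _
          simp [wAux, cAux, h1, h2, hvs, e2, e3]
      have hc_rest : ∀ a : α, ∀ p ∈ E.filter (fun p => ¬(p.1 = v ∨ p.2 = v)),
          wAux F G (I ^ ((d : ℝ)⁻¹)) s (Function.update x v a) p
            = wAux F G (I ^ ((d : ℝ)⁻¹)) (insert v s) x p := by
        intro a p hp
        rw [Finset.mem_filter, not_or] at hp
        obtain ⟨-, hp1, hp2⟩ := hp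
        simp only [wAux, Function.update_of_ne hp1, Function.update_of_ne hp2,
          Finset.mem_insert, hp1, hp2, false_or]
      have hc_meas : ∀ p : Fin k × Fin k, Measurable (cAux F G s x v p) := by
        intro p
        unfold cAux
        by_cases h1 : p.1 = v <;> by_cases h2 : p.2 ∈ s <;> by_cases h3 : p.1 ∈ s <;>
          simp only [h1, h2, h3, if_true, if_false] <;>
          first
            | exact measG
            | exact measF1 _
            | exact measF2 _
      -- the per-edge value after Hölder
      have hc_val : ∀ p ∈ Ev,
          (∫⁻ a, cAux F G s x v p a ^ d ∂ν) ^ ((d : ℝ)⁻¹)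
            = wAux F G (I ^ ((d : ℝ)⁻¹)) (insert v s) x p := by
        intro p hp
        rcases hEvmem p hp with ⟨h1, h2⟩ | ⟨h2, h1⟩
        · by_cases h2s : p.2 ∈ s
          · have : (fun a => cAux F G s x v p a) = fun a => G a := by
              funext a; simp only [cAux, if_pos h1, if_pos h2s]
            rw [show (∫⁻ a, cAux F G s x v p a ^ d ∂ν) = I by
              rw [← G_int]; exact lintegral_congr fun a => by
                simp only [cAux, if_pos h1, if_pos h2s]]
            simp only [wAux, Finset.mem_insert, h1, true_or, if_true, h2s, or_true]
          · rw [show (∫⁻ a, cAux F G s x v p a ^ d ∂ν) = G (x p.2) ^ d by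
              rw [G_pow]; exact lintegral_congr fun a => by
                simp only [cAux, if_pos h1, if_neg h2s]]
            rw [pow_inv]
            have hp2 : p.2 ∉ insert v s := by
              simp only [Finset.mem_insert, not_or]; exact ⟨h2, h2s⟩
            simp only [wAux, Finset.mem_insert, h1, true_or, if_true,
              h2, h2s, false_or, if_false]
        · have h1' : ¬ p.1 = v := h1
          by_cases h1s : p.1 ∈ s
          · rw [show (∫⁻ a, cAux F G s x v p a ^ d ∂ν) = I by
              rw [← G_int]; exact lintegral_congr fun a => by
                simp only [cAux, if_neg h1', if_pos h1s]]
            simp only [wAux, Finset.mem_insert, h1s, or_true, if_true, h2, true_or]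
          · rw [show (∫⁻ a, cAux F G s x v p a ^ d ∂ν) = G (x p.1) ^ d by
              rw [G_pow]
              refine lintegral_congr fun a => ?_
              simp only [cAux, if_neg h1', if_neg h1s]
              rw [hFsymm]]
            rw [pow_inv]
            simp only [wAux, Finset.mem_insert, h1, h1s, false_or, if_false,
              h2, true_or, if_true]
      have hcard : Ev.card = d := hdeg v
      calc ∫⁻ a, (∫⋯∫⁻_s, Φ ∂(fun _ : Fin k => ν)) (Function.update x v a) ∂ν
          ≤ ∫⁻ a, ∏ p ∈ E, wAux F G (I ^ ((d : ℝ)⁻¹)) s (Function.update x v a) p ∂ν :=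
            lintegral_mono fun a => ih _
        _ = ∫⁻ a, (∏ p ∈ Ev, cAux F G s x v p a)
              * ∏ p ∈ E.filter (fun p => ¬(p.1 = v ∨ p.2 = v)),
                  wAux F G (I ^ ((d : ℝ)⁻¹)) (insert v s) x p ∂ν := by
            refine lintegral_congr fun a => ?_
            rw [← Finset.prod_filter_mul_prod_filter_not E (fun p => p.1 = v ∨ p.2 = v)]
            rw [Finset.prod_congr rfl (hc_eq a), Finset.prod_congr rfl (hc_rest a)]
        _ = (∫⁻ a, ∏ p ∈ Ev, cAux F G s x v p a ∂ν)
              * ∏ p ∈ E.filter (fun p => ¬(p.1 = v ∨ p.2 = v)),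
                  wAux F G (I ^ ((d : ℝ)⁻¹)) (insert v s) x p := by
            rw [lintegral_mul_const]
            exact Finset.measurable_prod _ fun p _ => hc_meas p
        _ ≤ (∏ p ∈ Ev, (∫⁻ a, cAux F G s x v p a ^ d ∂ν) ^ ((d : ℝ)⁻¹))
              * ∏ p ∈ E.filter (fun p => ¬(p.1 = v ∨ p.2 = v)),
                  wAux F G (I ^ ((d : ℝ)⁻¹)) (insert v s) x p := by
            refine mul_le_mul_left ?_ _
            exact hoelder_equal ν Ev d hd hcard _ fun p _ => (hc_meas p).aemeasurable
        _ = (∏ p ∈ Ev, wAux F G (I ^ ((d : ℝ)⁻¹)) (insert v s) x p)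
              * ∏ p ∈ E.filter (fun p => ¬(p.1 = v ∨ p.2 = v)),
                  wAux F G (I ^ ((d : ℝ)⁻¹)) (insert v s) x p := by
            rw [Finset.prod_congr rfl hc_val]
        _ = ∏ p ∈ E, wAux F G (I ^ ((d : ℝ)⁻¹)) (insert v s) x p := by
            rw [Finset.prod_filter_mul_prod_filter_not]
  -- conclude
  have hfinal := key Finset.univ x₀
  rw [← lintegral_eq_lmarginal_univ x₀] at hfinal
  refine hfinal.trans (le_of_eq ?_)
  have : ∀ p ∈ E, wAux F G (I ^ ((d : ℝ)⁻¹)) Finset.univ x₀ p = I ^ ((d : ℝ)⁻¹) := by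
    intro p _
    simp [wAux]
  rw [Finset.prod_congr rfl this, Finset.prod_const, ← ENNReal.rpow_natCast _ E.card,
    ← ENNReal.rpow_mul, div_eq_mul_inv, mul_comm]

end aux

/-- A graphon: a measurable symmetric function with values in `[0,1]`. -/
def IsGraphon (f : ℝ → ℝ → ℝ) : Prop :=
  Measurable (Function.uncurry f) ∧ (∀ x y, f x y ∈ Set.Icc (0:ℝ) 1) ∧ ∀ x y, f x y = f y x

/-- The unit square `[0,1]²`. -/
def unitSq : Set (ℝ × ℝ) := Set.Icc (0:ℝ) 1 ×ˢ Set.Icc (0:ℝ) 1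

/-- The set of (ordered representatives of) edges of `H`: pairs `(i,j)` with `i < j` adjacent. -/
def edgePairs {k : ℕ} (H : SimpleGraph (Fin k)) [DecidableRel H.Adj] :
    Finset (Fin k × Fin k) :=
  Finset.univ.filter (fun p : Fin k × Fin k => p.1 < p.2 ∧ H.Adj p.1 p.2)

/-- The homomorphism density `t(H,f)` of a finite simple graph `H` in a graphon `f`. -/
def homDen {k : ℕ} (H : SimpleGraph (Fin k)) [DecidableRel H.Adj] (f : ℝ → ℝ → ℝ) : ℝ :=
  ∫ x in Set.univ.pi (fun _ : Fin k => Set.Icc (0:ℝ) 1),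
    ∏ p ∈ edgePairs H, f (x p.1) (x p.2)

lemma card_incident {k : ℕ} (H : SimpleGraph (Fin k)) [DecidableRel H.Adj] (v : Fin k) :
    ((edgePairs H).filter (fun p => p.1 = v ∨ p.2 = v)).card = H.degree v := by
  classical
  rw [← SimpleGraph.card_neighborFinset_eq_degree]
  apply Finset.card_bij' (fun p _ => if p.1 = v then p.2 else p.1)
    (fun u _ => if v < u then (v, u) else (u, v))
  · intro p hp
    simp only [Finset.mem_filter, edgePairs, Finset.mem_univ, true_and] at hp
    obtain ⟨⟨hlt, hadj⟩, hv⟩ := hp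
    rcases hv with h1 | h2
    · simp only [h1, if_pos rfl, SimpleGraph.mem_neighborFinset]
      exact h1 ▸ hadj
    · have hne : p.1 ≠ v := by rintro rfl; exact absurd h2 hlt.ne'
      simp only [if_neg hne, SimpleGraph.mem_neighborFinset]
      exact h2 ▸ hadj.symm
  · intro u hu
    rw [SimpleGraph.mem_neighborFinset] at hu
    by_cases h : v < u
    · simp only [if_pos h, edgePairs, Finset.mem_filter, Finset.mem_univ, true_and]
      exact ⟨⟨h, hu⟩, by simp⟩

    · have h' : u < v := lt_of_le_of_ne (not_lt.1 h) (fun hh => hu.ne' hh)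
      simp only [if_neg h, edgePairs, Finset.mem_filter, Finset.mem_univ, true_and]
      exact ⟨⟨h', hu.symm⟩, by simp⟩
  · intro p hp
    simp only [Finset.mem_filter, edgePairs, Finset.mem_univ, true_and] at hp
    obtain ⟨⟨hlt, hadj⟩, hv⟩ := hp
    rcases hv with h1 | h2
    · have hlt' : v < p.2 := h1 ▸ hlt
      rw [if_pos h1, if_pos hlt', ← h1]
    · have hne : p.1 ≠ v := by rintro rfl; exact absurd h2 hlt.ne'
      have hnlt : ¬ v < p.1 := by rw [← h2]; exact not_lt.2 hlt.le
      rw [if_neg hne, if_neg hnlt, ← h2]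
  · intro u hu
    rw [SimpleGraph.mem_neighborFinset] at hu
    have hne : u ≠ v := fun hh => (hu.ne' hh)
    by_cases h : v < u
    · rw [if_pos h]; simp
    · rw [if_neg h]; simp [hne]

/-- Generalized Hölder inequality: for a `d`-regular graph `H`,
`t(H,f) ≤ (∫ f^d)^{e(H)/d}`. -/
theorem stmt_13 (d k : ℕ) (hd : 1 ≤ d) (H : SimpleGraph (Fin k)) [DecidableRel H.Adj]
    (hreg : ∀ v : Fin k, H.degree v = d)
    (f : ℝ → ℝ → ℝ) (hf : IsGraphon f) :
    homDen H f ≤ (∫ p in unitSq, (f p.1 p.2) ^ d) ^ (((edgePairs H).card : ℝ) / d) := by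
  classical
  obtain ⟨hmeas, hrange, hsymm⟩ := hf
  have hf0 : ∀ x y, 0 ≤ f x y := fun x y => (hrange x y).1
  have hf1 : ∀ x y, f x y ≤ 1 := fun x y => (hrange x y).2
  set ν : Measure ℝ := volume.restrict (Set.Icc 0 1) with hν
  haveI : IsProbabilityMeasure ν := ⟨by
    rw [hν, Measure.restrict_apply_univ, Real.volume_Icc]; norm_num⟩
  set F : ℝ → ℝ → ℝ≥0∞ := fun x y => ENNReal.ofReal (f x y) with hFdef
  have hF : Measurable (Function.uncurry F) := by
    apply ENNReal.measurable_ofReal.comp hmeas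
  have hFsymm : ∀ x y, F x y = F y x := fun x y => by rw [hFdef]; simp [hsymm x y]
  have hFle : ∀ x y, F x y ≤ 1 := fun x y => by
    rw [hFdef]
    exact ENNReal.ofReal_le_one.2 (hf1 x y)
  set E := edgePairs H with hE
  have hne : ∀ p ∈ E, p.1 ≠ p.2 := by
    intro p hp
    rw [hE, edgePairs, Finset.mem_filter] at hp
    exact hp.2.1.ne
  have hdeg : ∀ v : Fin k, (E.filter (fun p => p.1 = v ∨ p.2 = v)).card = d := by
    intro v; rw [hE, card_incident, hreg]
  -- restriction of pi volume
  have hpi : (volume : Measure (Fin k → ℝ)).restrict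
      (Set.univ.pi fun _ : Fin k => Set.Icc (0:ℝ) 1) = Measure.pi (fun _ : Fin k => ν) := by
    refine (Measure.pi_eq fun t ht => ?_).symm
    rw [Measure.restrict_apply (MeasurableSet.univ_pi ht), ← Set.pi_inter_distrib,
      volume_pi, Measure.pi_pi]
    exact Finset.prod_congr rfl fun i _ => (Measure.restrict_apply (ht i)).symm
  -- LHS as a lintegral
  have hg_meas : Measurable (fun x : Fin k → ℝ => ∏ p ∈ E, f (x p.1) (x p.2)) :=
    Finset.measurable_prod _ fun p _ =>
      hmeas.comp (((measurable_pi_apply p.1).prodMk (measurable_pi_apply p.2) :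
        Measurable fun y : Fin k → ℝ => (y p.1, y p.2)))
  have hLHS : homDen H f
      = (∫⁻ x, ∏ p ∈ E, F (x p.1) (x p.2) ∂(Measure.pi fun _ : Fin k => ν)).toReal := by
    rw [homDen, ← hE, ← hpi]
    rw [integral_eq_lintegral_of_nonneg_ae
      (Filter.Eventually.of_forall fun x => Finset.prod_nonneg fun p _ => hf0 _ _)
      hg_meas.aestronglyMeasurable]
    congr 1
    refine lintegral_congr fun x => ?_
    rw [ENNReal.ofReal_prod_of_nonneg fun p _ => hf0 _ _]
  -- RHS as a lintegral
  set I : ℝ≥0∞ := ∫⁻ y, ∫⁻ x, F x y ^ d ∂ν ∂ν with hI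
  have hIle : I ≤ 1 := by
    rw [hI]
    calc ∫⁻ y, ∫⁻ x, F x y ^ d ∂ν ∂ν
        ≤ ∫⁻ _, 1 ∂ν := by
          refine lintegral_mono fun y => ?_
          calc ∫⁻ x, F x y ^ d ∂ν ≤ ∫⁻ _, 1 ∂ν :=
                lintegral_mono fun x => pow_le_one' (hFle x y) d
            _ = 1 := by simp
      _ = 1 := by simp
  have hItop : I ≠ ⊤ := (lt_of_le_of_lt hIle ENNReal.one_lt_top).ne
  have hsq : (volume : Measure (ℝ × ℝ)).restrict unitSq = ν.prod ν := by
    rw [unitSq, hν, Measure.prod_restrict, ← Measure.volume_eq_prod]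
  have hRHS : (∫ p in unitSq, (f p.1 p.2) ^ d) = I.toReal := by
    rw [hsq]
    have hm : Measurable (fun p : ℝ × ℝ => (f p.1 p.2) ^ d) := hmeas.pow_const d
    rw [integral_eq_lintegral_of_nonneg_ae
      (Filter.Eventually.of_forall fun p => pow_nonneg (hf0 _ _) d)
      hm.aestronglyMeasurable]
    congr 1
    have : ∀ p : ℝ × ℝ, ENNReal.ofReal ((f p.1 p.2) ^ d) = F p.1 p.2 ^ d := fun p =>
      ENNReal.ofReal_pow (hf0 _ _) d
    rw [lintegral_congr this, hI]
    rw [lintegral_prod (fun z : ℝ × ℝ => F z.1 z.2 ^ d) ((hF.pow_const d).aemeasurable)]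
    exact lintegral_congr fun y => lintegral_congr fun x => by rw [hFsymm]
  rw [hLHS, hRHS]
  have hkey := finner_reg ν (k := k) (d := d) hd E hne hdeg F hF hFsymm (fun _ => 0)
  rw [← hI] at hkey
  have hrtop : I ^ ((E.card : ℝ) / d) ≠ ⊤ :=
    ENNReal.rpow_ne_top_of_nonneg (by positivity) hItop
  calc (∫⁻ x, ∏ p ∈ E, F (x p.1) (x p.2) ∂(Measure.pi fun _ : Fin k => ν)).toReal
      ≤ (I ^ ((E.card : ℝ) / d)).toReal := ENNReal.toReal_mono hrtop hkey
    _ = I.toReal ^ ((E.card : ℝ) / d) := (ENNReal.toReal_rpow _ _).symm
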